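/- Let b ∈ {0, 1} and let g be a square matrix over ℝ indexed by a type ι satisfying the graded symmetry gᵀ = (−1)^b · g (g symmetric if b = 0, antisymmetric if b = 1). Let S be a finite set with 2n elements, φ : S → ι an arbitrary index assignment, M_ref a directed pairing on S, and let E, E' be two directed pairings on S with the same underlying unordered pairing (E' is obtained from E by reordering its pairs and reversing the orientation of some of them). Then ε(E, M_ref)^b · ∏_{(k,l) pair of E} g (φ k) (φ l) = ε(E', M_ref)^b · ∏_{(k,l) pair of E'} g (φ k) (φ l); i.e. the sign-weighted product of bilinear-form contractions defining a tensor invariant is independent of the chosen orientation of the stranded graph. -/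

import Mathlib

/-- The listing function of a candidate directed pairing `M : Fin n → S × S`:
it sends `(i, 0)` to the first element of the `i`-th pair and `(i, 1)` to the second. -/
def pairingListing {S : Type*} {n : ℕ} (M : Fin n → S × S) : Fin n × Fin 2 → S :=
  fun p => if p.2 = 0 then (M p.1).1 else (M p.1).2

/-- `M : Fin n → S × S` is a directed pairing on `S` if its `2n` components are
pairwise distinct and exhaust `S`, i.e. its listing function is a bijection. -/
def IsDirectedPairing {S : Type*} {n : ℕ} (M : Fin n → S × S) : Prop :=
  Function.Bijective (pairingListing M)

/-- The bijection `fl_M : Fin n × Fin 2 ≃ S` induced by a directed pairing. -/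
noncomputable def pairingFlatten {S : Type*} {n : ℕ} {M : Fin n → S × S}
    (h : IsDirectedPairing M) : Fin n × Fin 2 ≃ S :=
  Equiv.ofBijective _ h

/-- The sign `ε(M₁, M₂)` of two directed pairings on the same finite set `S`:
the sign of the permutation `fl_{M₂} ∘ fl_{M₁}⁻¹` of `S`. -/
noncomputable def pairingSign {S : Type*} [Fintype S] [DecidableEq S] {n : ℕ}
    {M₁ M₂ : Fin n → S × S} (h₁ : IsDirectedPairing M₁) (h₂ : IsDirectedPairing M₂) : ℤˣ :=
  Equiv.Perm.sign ((pairingFlatten h₁).symm.trans (pairingFlatten h₂))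

/-- The sign-weighted product of bilinear-form contractions defining a tensor invariant
is independent of the chosen orientation of the stranded graph: if `E'` is obtained
from the directed pairing `E` by reordering its pairs and reversing the orientation of
some of them, and `g` has the graded symmetry `gᵀ = (−1)^b g`, then
`ε(E, M_ref)^b · ∏ g (φ k) (φ l) = ε(E', M_ref)^b · ∏ g (φ k) (φ l)`. -/
theorem invariant_orientation_indep {ι : Type*} (b : ℕ) (hb : b = 0 ∨ b = 1)
    (g : Matrix ι ι ℝ) (hg : g.transpose = (-1 : ℝ) ^ b • g)
    {S : Type*} [Fintype S] [DecidableEq S] {n : ℕ} (φ : S → ι)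
    (Mref E E' : Fin n → S × S)
    (href : IsDirectedPairing Mref) (hE : IsDirectedPairing E)
    (hE' : IsDirectedPairing E')
    (hsame : ∃ τ : Equiv.Perm (Fin n), ∀ i,
      E' i = E (τ i) ∨ E' i = ((E (τ i)).2, (E (τ i)).1)) :
    ((pairingSign hE href : ℤ) : ℝ) ^ b * ∏ i, g (φ (E i).1) (φ (E i).2) =
      ((pairingSign hE' href : ℤ) : ℝ) ^ b * ∏ i, g (φ (E' i).1) (φ (E' i).2) := by
  classical
  obtain ⟨τ, hτ⟩ := hsame
  -- per-pair flip permutation of `Fin 2`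
  set s : Fin n → Equiv.Perm (Fin 2) :=
    fun i => if E' i = E (τ i) then 1 else Equiv.swap 0 1 with hs
  -- the permutation of `Fin n × Fin 2` relating the listings
  set σ : Equiv.Perm (Fin n × Fin 2) :=
    (Equiv.prodCongrLeft fun _ : Fin 2 => τ).trans
      (Equiv.prodCongrRight fun i => s (τ.symm i)) with hσ
  have hσapp : ∀ p : Fin n × Fin 2, σ p = (τ p.1, s p.1 p.2) := by
    rintro ⟨i, j⟩
    simp [hσ, Equiv.prodCongrLeft, Equiv.prodCongrRight]
  -- the listing of E' is the listing of E composed with σ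
  have hlist : pairingListing E' = pairingListing E ∘ σ := by
    funext p
    obtain ⟨i, j⟩ := p
    simp only [Function.comp_apply, hσapp]
    by_cases h : E' i = E (τ i)
    · simp [hs, h, pairingListing]
    · have h2 : E' i = ((E (τ i)).2, (E (τ i)).1) := (hτ i).resolve_left h
      have hsi : s i = Equiv.swap 0 1 := by simp [hs, h]
      fin_cases j <;> simp [hsi, h2, pairingListing]
  have hflat : pairingFlatten hE' = σ.trans (pairingFlatten hE) := by
    apply Equiv.coe_fn_injective
    exact hlist
  -- sign relation
  set k : ℕ := (Finset.univ.filter fun i => ¬ E' i = E (τ i)).card with hk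
  have hsignσ : Equiv.Perm.sign σ = (-1 : ℤˣ) ^ k := by
    have : σ = (Equiv.prodCongrRight fun i => s (τ.symm i)) *
        (Equiv.prodCongrLeft fun _ : Fin 2 => τ) := rfl
    rw [this, map_mul, Equiv.Perm.sign_prodCongrRight, Equiv.Perm.sign_prodCongrLeft]
    have h1 : ∏ i : Fin n, Equiv.Perm.sign (s (τ.symm i)) = ∏ i : Fin n, Equiv.Perm.sign (s i) :=
      Equiv.prod_comp τ.symm fun i => Equiv.Perm.sign (s i)
    have h2 : ∀ i, Equiv.Perm.sign (s i) = if E' i = E (τ i) then 1 else (-1 : ℤˣ) := by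
      intro i
      by_cases h : E' i = E (τ i) <;>
        simp [hs, h, Equiv.Perm.sign_swap (by decide : (0 : Fin 2) ≠ 1)]
    rw [h1, Finset.prod_congr rfl fun i _ => h2 i, Finset.prod_ite, Finset.prod_const,
      Finset.prod_const, one_pow, one_mul, Finset.prod_const, Finset.card_univ]
    simp [hk, Int.units_pow_two]
  have hsign' : pairingSign hE' href = pairingSign hE href * (-1 : ℤˣ) ^ k := by
    have heq : (pairingFlatten hE').symm.trans (pairingFlatten href) =
        (((pairingFlatten hE).symm.trans σ.symm).trans (pairingFlatten hE)).trans
          ((pairingFlatten hE).symm.trans (pairingFlatten href)) := by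
      rw [hflat]; ext x; simp
    rw [pairingSign, heq]
    have : ((((pairingFlatten hE).symm.trans σ.symm).trans (pairingFlatten hE)).trans
          ((pairingFlatten hE).symm.trans (pairingFlatten href))) =
        ((pairingFlatten hE).symm.trans (pairingFlatten href)) *
          (((pairingFlatten hE).symm.trans σ.symm).trans (pairingFlatten hE)) := rfl
    rw [this, map_mul, Equiv.Perm.sign_symm_trans_trans, Equiv.Perm.sign_symm, hsignσ]
    rfl
  -- product relation
  have hprod : ∏ i, g (φ (E' i).1) (φ (E' i).2) =
      ((-1 : ℝ) ^ b) ^ k * ∏ i, g (φ (E i).1) (φ (E i).2) := by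
    have hterm : ∀ i, g (φ (E' i).1) (φ (E' i).2) =
        (if E' i = E (τ i) then (1:ℝ) else (-1:ℝ)^b) * g (φ (E (τ i)).1) (φ (E (τ i)).2) := by
      intro i
      by_cases h : E' i = E (τ i)
      · simp [h]
      · have h2 : E' i = ((E (τ i)).2, (E (τ i)).1) := (hτ i).resolve_left h
        have := congrFun (congrFun hg (φ (E (τ i)).1)) (φ (E (τ i)).2)
        simp only [Matrix.transpose_apply, Matrix.smul_apply, smul_eq_mul] at this
        rw [h2, if_neg (h2 ▸ h)]
        exact this
    rw [Finset.prod_congr rfl fun i _ => hterm i, Finset.prod_mul_distrib]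
    congr 1
    · rw [Finset.prod_ite, Finset.prod_const, Finset.prod_const, one_pow, one_mul, hk]
    · exact Equiv.prod_comp τ fun j => g (φ (E j).1) (φ (E j).2)
  -- assemble
  rw [hsign', hprod]
  push_cast
  have key : ((-1:ℝ)^k)^b * ((-1:ℝ)^b)^k = 1 := by
    rw [← pow_mul, ← pow_mul, mul_comm k b, ← pow_add]
    exact Even.neg_one_pow ⟨b * k, rfl⟩
  linear_combination (-((pairingSign hE href : ℤ):ℝ)^b * ∏ i, g (φ (E i).1) (φ (E i).2)) * key
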